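/- For all x ∈ (0, π/2), one has (cos x + 2)/3^{α₁} < sin x / x < (cos x + 2)/3, where α₁ = log π / log 3, and both constants are best possible. -/

import Mathlib

open Real Set Filter Topology

private lemma aux_xcos_lt_sin {x : ℝ} (hx0 : 0 < x) (hx2 : x < π / 2) :
    x * Real.cos x < Real.sin x := by
  have hc : 0 < Real.cos x := Real.cos_pos_of_mem_Ioo ⟨by linarith [Real.pi_pos], hx2⟩
  have ht := Real.lt_tan hx0 hx2
  rw [Real.tan_eq_sin_div_cos] at ht
  calc x * Real.cos x < (Real.sin x / Real.cos x) * Real.cos x := by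
        exact mul_lt_mul_of_pos_right ht hc
    _ = Real.sin x := by field_simp

/-- Cusa-Huygens: 3 sin x < x (cos x + 2) on (0, π/2]. -/
private lemma aux_cusa {x : ℝ} (hx0 : 0 < x) (hx2 : x < π / 2) :
    3 * Real.sin x < x * (Real.cos x + 2) := by
  set g1 : ℝ → ℝ := fun x => 2 - 2 * Real.cos x - x * Real.sin x with hg1def
  have hg1d : ∀ y : ℝ, HasDerivAt g1 (Real.sin y - y * Real.cos y) y := by
    intro y
    have h1 : HasDerivAt (fun t : ℝ => 2 - 2 * Real.cos t - t * Real.sin t)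
        (0 - 2 * (-Real.sin y) - (1 * Real.sin y + y * Real.cos y)) y := by
      exact (((hasDerivAt_const y (2:ℝ)).sub ((Real.hasDerivAt_cos y).const_mul 2)).sub
        ((hasDerivAt_id y).mul (Real.hasDerivAt_sin y)))
    convert h1 using 1; ring
  -- g1 is strictly monotone on [0, π/2]
  have hmono1 : StrictMonoOn g1 (Icc 0 (π/2)) := by
    apply strictMonoOn_of_deriv_pos (convex_Icc _ _)
    · exact Continuous.continuousOn (by continuity)
    · intro y hy
      rw [interior_Icc] at hy
      rw [(hg1d y).deriv]
      have := aux_xcos_lt_sin hy.1 hy.2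
      linarith
  have hg1pos : ∀ y : ℝ, 0 < y → y < π/2 → 0 < g1 y := by
    intro y hy0 hy2
    have := hmono1 ⟨le_refl 0, le_of_lt (by linarith [Real.pi_pos])⟩
      ⟨le_of_lt hy0, le_of_lt hy2⟩ hy0
    simpa [hg1def] using this
  set g : ℝ → ℝ := fun x => x * (Real.cos x + 2) - 3 * Real.sin x with hgdef
  have hgd : ∀ y : ℝ, HasDerivAt g (g1 y) y := by
    intro y
    have h1 : HasDerivAt (fun t : ℝ => t * (Real.cos t + 2) - 3 * Real.sin t)
        (1 * (Real.cos y + 2) + y * (-Real.sin y + 0) - 3 * Real.cos y) y := by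
      exact ((hasDerivAt_id y).mul ((Real.hasDerivAt_cos y).add (hasDerivAt_const y 2))).sub
        ((Real.hasDerivAt_sin y).const_mul 3)
    convert h1 using 1; simp [hg1def]; ring
  have hmono : StrictMonoOn g (Icc 0 (π/2)) := by
    apply strictMonoOn_of_deriv_pos (convex_Icc _ _)
    · exact Continuous.continuousOn (by continuity)
    · intro y hy
      rw [interior_Icc] at hy
      rw [(hgd y).deriv]
      exact hg1pos y hy.1 hy.2
  have := hmono ⟨le_refl 0, le_of_lt (by linarith [Real.pi_pos])⟩
    ⟨le_of_lt hx0, le_of_lt hx2⟩ hx0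
  simp only [hgdef] at this
  simp at this
  linarith

/-- Left inequality: x (cos x + 2) < π sin x on (0, π/2). -/
private lemma aux_left {x : ℝ} (hx0 : 0 < x) (hx2 : x < π / 2) :
    x * (Real.cos x + 2) < π * Real.sin x := by
  set h : ℝ → ℝ := fun x => π * Real.sin x - x * (Real.cos x + 2) with hhdef
  have hd1 : ∀ y : ℝ, HasDerivAt h (π * Real.cos y - (Real.cos y + 2) + y * Real.sin y) y := by
    intro y
    have h1 : HasDerivAt (fun t : ℝ => π * Real.sin t - t * (Real.cos t + 2))
        (π * Real.cos y - (1 * (Real.cos y + 2) + y * (-Real.sin y + 0))) y := by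
      exact ((Real.hasDerivAt_sin y).const_mul π).sub
        ((hasDerivAt_id y).mul ((Real.hasDerivAt_cos y).add (hasDerivAt_const y 2)))
    convert h1 using 1; ring
  have hderiv : deriv h = fun y => π * Real.cos y - (Real.cos y + 2) + y * Real.sin y := by
    funext y; exact (hd1 y).deriv
  have hd2 : ∀ y : ℝ, HasDerivAt (deriv h) ((2 - π) * Real.sin y + y * Real.cos y) y := by
    intro y
    rw [hderiv]
    have h1 : HasDerivAt (fun t : ℝ => π * Real.cos t - (Real.cos t + 2) + t * Real.sin t)
        (π * (-Real.sin y) - (-Real.sin y + 0) + (1 * Real.sin y + y * Real.cos y)) y := by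
      exact (((Real.hasDerivAt_cos y).const_mul π).sub
        ((Real.hasDerivAt_cos y).add (hasDerivAt_const y 2))).add
        ((hasDerivAt_id y).mul (Real.hasDerivAt_sin y))
    convert h1 using 1; ring
  have hconc : StrictConcaveOn ℝ (Icc 0 (π/2)) h := by
    apply strictConcaveOn_of_deriv2_neg (convex_Icc _ _)
    · exact Continuous.continuousOn (by continuity)
    · intro y hy
      rw [interior_Icc] at hy
      have : deriv (deriv h) y = (2 - π) * Real.sin y + y * Real.cos y := (hd2 y).deriv
      simp only [Function.iterate_succ, Function.iterate_zero, Function.comp_apply, id_eq]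
      rw [this]
      have h1 := aux_xcos_lt_sin hy.1 hy.2
      have h2 : 0 < Real.sin y := Real.sin_pos_of_pos_of_lt_pi hy.1
        (by linarith [Real.pi_pos, hy.2])
      have hπ3 : (3:ℝ) < π := Real.pi_gt_three
      nlinarith [h1, h2, hπ3]
  have hpi : (0:ℝ) < π := Real.pi_pos
  set b : ℝ := x / (π/2) with hbdef
  have hb0 : 0 < b := div_pos hx0 (by linarith)
  have hb1 : b < 1 := (div_lt_one (by linarith)).mpr hx2
  have key := hconc.2 (show (0:ℝ) ∈ Icc 0 (π/2) from ⟨le_refl 0, by linarith⟩)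
    (show π/2 ∈ Icc (0:ℝ) (π/2) from ⟨by linarith, le_refl _⟩)
    (show (0:ℝ) ≠ π/2 by intro hc; rw [← hc] at hx2; linarith)
    (show (0:ℝ) < 1 - b by linarith) hb0 (show 1 - b + b = 1 by ring)
  have hx' : (1 - b) • (0:ℝ) + b • (π/2) = x := by
    have hpne : π ≠ 0 := ne_of_gt hpi
    simp only [smul_eq_mul, hbdef, mul_zero]
    field_simp
    ring
  rw [hx'] at key
  have h0 : h 0 = 0 := by simp [hhdef]
  have hp2 : h (π/2) = 0 := by simp [hhdef]
  rw [h0, hp2] at key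
  simp only [smul_eq_mul, mul_zero, add_zero] at key
  simp only [hhdef] at key
  linarith

private lemma aux_rpow_alpha : (3:ℝ) ^ (Real.log π / Real.log 3) = π := by
  rw [Real.rpow_def_of_pos (by norm_num)]
  have h3 : Real.log 3 ≠ 0 := ne_of_gt (Real.log_pos (by norm_num))
  rw [mul_comm, div_mul_cancel₀ _ h3, Real.exp_log Real.pi_pos]

theorem stmt13 :
    (∀ x : ℝ, x ∈ Ioo 0 (π / 2) →
      (Real.cos x + 2) / (3 : ℝ) ^ (Real.log π / Real.log 3) < Real.sin x / x ∧
      Real.sin x / x < (Real.cos x + 2) / 3) ∧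
    (∀ a : ℝ,
      (∀ x : ℝ, x ∈ Ioo 0 (π / 2) →
        (Real.cos x + 2) / (3 : ℝ) ^ a < Real.sin x / x) →
      Real.log π / Real.log 3 ≤ a) ∧
    (∀ b : ℝ,
      (∀ x : ℝ, x ∈ Ioo 0 (π / 2) →
        Real.sin x / x < (Real.cos x + 2) / (3 : ℝ) ^ b) →
      b ≤ 1) := by
  refine ⟨?_, ?_, ?_⟩
  · rintro x ⟨hx0, hx2⟩
    constructor
    · rw [aux_rpow_alpha, div_lt_div_iff₀ Real.pi_pos hx0]
      nlinarith [aux_left hx0 hx2]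
    · rw [div_lt_div_iff₀ hx0 (by norm_num : (0:ℝ) < 3)]
      nlinarith [aux_cusa hx0 hx2]
  · intro a ha
    have hpi : (0:ℝ) < π := Real.pi_pos
    have hcl : π/2 ∈ closure (Ioo (0:ℝ) (π/2)) := by
      rw [closure_Ioo (by linarith : (0:ℝ) ≠ π/2)]
      exact ⟨by linarith, le_refl _⟩
    have hne : (𝓝[Ioo (0:ℝ) (π/2)] (π/2)).NeBot :=
      mem_closure_iff_nhdsWithin_neBot.mp hcl
    set f : ℝ → ℝ := fun x => Real.sin x / x - (Real.cos x + 2) / (3:ℝ)^a with hfdef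
    have h1 : ContinuousAt (fun x : ℝ => Real.sin x / x) (π/2) :=
      ContinuousAt.div Real.continuous_sin.continuousAt continuousAt_id
        (by simp)
    have h2 : ContinuousAt (fun x : ℝ => (Real.cos x + 2) / (3:ℝ)^a) (π/2) :=
      (Real.continuous_cos.continuousAt.add continuousAt_const).div_const _
    have ht : Tendsto f (𝓝[Ioo (0:ℝ) (π/2)] (π/2)) (𝓝 (f (π/2))) :=
      ((h1.sub h2).continuousWithinAt).tendsto
    have hge : 0 ≤ f (π/2) := by
      refine ge_of_tendsto ht ?_
      filter_upwards [self_mem_nhdsWithin] with x hx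
      have := ha x hx
      simp only [hfdef]
      linarith
    have h3a : (0:ℝ) < (3:ℝ)^a := Real.rpow_pos_of_pos (by norm_num) a
    simp only [hfdef, Real.sin_pi_div_two, Real.cos_pi_div_two, zero_add, sub_nonneg] at hge
    have hple : π ≤ (3:ℝ)^a := by
      rw [div_le_div_iff₀ h3a (by linarith : (0:ℝ) < π/2)] at hge
      linarith
    have hlog : Real.log π ≤ a * Real.log 3 := by
      calc Real.log π ≤ Real.log ((3:ℝ)^a) := Real.log_le_log hpi hple
        _ = a * Real.log 3 := Real.log_rpow (by norm_num) a
    rw [div_le_iff₀ (Real.log_pos (by norm_num))]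
    exact hlog
  · intro b hb
    have hpi : (0:ℝ) < π := Real.pi_pos
    have hcl : (0:ℝ) ∈ closure (Ioo (0:ℝ) (π/2)) := by
      rw [closure_Ioo (by linarith : (0:ℝ) ≠ π/2)]
      exact ⟨le_refl _, by linarith⟩
    have hne : (𝓝[Ioo (0:ℝ) (π/2)] (0:ℝ)).NeBot :=
      mem_closure_iff_nhdsWithin_neBot.mp hcl
    have hs : Tendsto (fun x : ℝ => Real.sin x / x) (𝓝[≠] (0:ℝ)) (𝓝 1) := by
      have h := Real.hasDerivAt_sin 0
      rw [hasDerivAt_iff_tendsto_slope] at h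
      simp only [Real.cos_zero] at h
      convert h using 2 with x
      simp [slope_def_field, div_eq_div_iff]
    have hmono : 𝓝[Ioo (0:ℝ) (π/2)] (0:ℝ) ≤ 𝓝[≠] (0:ℝ) :=
      nhdsWithin_mono _ (fun x hx => ne_of_gt hx.1)
    have hs' : Tendsto (fun x : ℝ => Real.sin x / x) (𝓝[Ioo (0:ℝ) (π/2)] 0) (𝓝 1) :=
      hs.mono_left hmono
    have htc : Tendsto (fun x : ℝ => (Real.cos x + 2) / (3:ℝ)^b)
        (𝓝[Ioo (0:ℝ) (π/2)] 0) (𝓝 ((Real.cos 0 + 2) / (3:ℝ)^b)) :=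
      (((Real.continuous_cos.continuousAt.add continuousAt_const).div_const _).continuousWithinAt).tendsto
    have hkey : (1:ℝ) ≤ (Real.cos 0 + 2) / (3:ℝ)^b := by
      refine le_of_tendsto_of_tendsto hs' htc ?_
      filter_upwards [self_mem_nhdsWithin] with x hx
      exact le_of_lt (hb x hx)
    simp only [Real.cos_zero] at hkey
    have h3b : (0:ℝ) < (3:ℝ)^b := Real.rpow_pos_of_pos (by norm_num) b
    have hle : (3:ℝ)^b ≤ 3 := by
      rw [le_div_iff₀ h3b, one_mul] at hkey
      linarith
    have : (3:ℝ)^b ≤ (3:ℝ)^(1:ℝ) := by rwa [Real.rpow_one]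
    exact (Real.rpow_le_rpow_left_iff (by norm_num : (1:ℝ) < 3)).mp this
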